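/- Let $N_1 > N_2 > 0$ and $a_2 > a_1 > 1$ be reals, and define for $\tau \ge 0$ $$g(\tau) = N_1 \log\frac{1+\tau}{\tfrac{1}{a_1}+\tau} + N_2 \log\frac{a_2\left(\tfrac{1}{a_2}+\tau\right)}{1+\tau}.$$ If $\dfrac{N_2}{N_1} < \dfrac{a_1 - 1}{a_2 - 1}$, then for all $\tau \ge 0$ one has $g(\tau) \le g(0) = N_1 \log a_1$; that is, the maximum of $g$ over $[0,\infty)$ is attained at $\tau = 0$ with value $N_1 \log a_1$. -/

import Mathlib

/-- For the two-level converse bound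
`g(τ) = N1 log ((1+τ)/(1/a1+τ)) + N2 log (a2 (1/a2+τ)/(1+τ))`, if
`N2/N1 < (a1-1)/(a2-1)` then `g` is maximized over `[0, ∞)` at `τ = 0`,
with value `N1 log a1`. -/
theorem converse_max_at_zero
    (N1 N2 a1 a2 : ℝ) (h12 : N2 < N1) (h2 : 0 < N2)
    (ha1 : 1 < a1) (ha12 : a1 < a2)
    (hcond : N2 / N1 < (a1 - 1) / (a2 - 1))
    (g : ℝ → ℝ)
    (hg : ∀ τ : ℝ, g τ = N1 * Real.log ((1 + τ) / (1 / a1 + τ)) +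
      N2 * Real.log (a2 * (1 / a2 + τ) / (1 + τ))) :
    (∀ τ : ℝ, 0 ≤ τ → g τ ≤ g 0) ∧ g 0 = N1 * Real.log a1 := by
  have hN1 : 0 < N1 := h2.trans h12
  have ha1' : (0:ℝ) < a1 := by linarith
  have ha2' : (0:ℝ) < a2 := by linarith
  have hg0 : g 0 = N1 * Real.log a1 := by
    rw [hg]
    have e1 : (1 + (0:ℝ)) / (1 / a1 + 0) = a1 := by field_simp; ring
    have e2 : a2 * (1 / a2 + (0:ℝ)) / (1 + 0) = 1 := by field_simp; ring
    rw [e1, e2, Real.log_one]; ring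
  refine ⟨?_, hg0⟩
  intro τ hτ
  rw [hg, hg0]
  have h1τ : (0:ℝ) < 1 + τ := by linarith
  have h1a1τ : (0:ℝ) < 1 + a1 * τ := by nlinarith
  have h1a2τ : (0:ℝ) < 1 + a2 * τ := by nlinarith
  have e1 : (1 + τ) / (1 / a1 + τ) = a1 * (1 + τ) / (1 + a1 * τ) := by
    rw [div_eq_div_iff (by positivity) h1a1τ.ne']; field_simp [ha1'.ne']
  have e2 : a2 * (1 / a2 + τ) / (1 + τ) = (1 + a2 * τ) / (1 + τ) := by
    rw [mul_add, mul_one_div_cancel ha2'.ne']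
  rw [e1, e2,
    Real.log_div (by positivity) (by positivity),
    Real.log_div (by positivity) (by positivity),
    Real.log_mul (by positivity) (by positivity)]
  set L1 := Real.log (1 + τ) with hL1
  set La := Real.log (1 + a1 * τ) with hLa
  set L2 := Real.log (1 + a2 * τ) with hL2
  -- key concavity inequality
  have hμ0 : (0:ℝ) ≤ (a1 - 1) / (a2 - 1) := by
    apply div_nonneg <;> linarith
  have hl0 : (0:ℝ) ≤ (a2 - a1) / (a2 - 1) := by
    apply div_nonneg <;> linarith
  have h21ne : a2 - 1 ≠ 0 := by intro h; linarith [sub_eq_zero.mp h]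
  have hsum : (a2 - a1) / (a2 - 1) + (a1 - 1) / (a2 - 1) = 1 := by
    rw [← add_div, div_eq_one_iff_eq h21ne]; ring
  have key := (strictConcaveOn_log_Ioi.concaveOn).2
    (Set.mem_Ioi.2 h1τ) (Set.mem_Ioi.2 h1a2τ) hl0 hμ0 hsum
  simp only [smul_eq_mul] at key
  have harg : (a2 - a1) / (a2 - 1) * (1 + τ) + (a1 - 1) / (a2 - 1) * (1 + a2 * τ)
      = 1 + a1 * τ := by
    rw [div_mul_eq_mul_div, div_mul_eq_mul_div, ← add_div, div_eq_iff h21ne]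
    ring
  rw [harg] at key
  -- key : (a2-a1)/(a2-1) * L1 + (a1-1)/(a2-1) * L2 ≤ La
  have key' : (a1 - 1) * (L2 - L1) ≤ (a2 - 1) * (La - L1) := by
    have h21 : (0:ℝ) < a2 - 1 := by linarith
    have := mul_le_mul_of_nonneg_left key (le_of_lt h21)
    have hexp : (a2 - 1) * ((a2 - a1) / (a2 - 1) * L1 + (a1 - 1) / (a2 - 1) * L2)
        = (a2 - a1) * L1 + (a1 - 1) * L2 := by
      field_simp
    nlinarith [this, hexp]
  have hL21 : 0 ≤ L2 - L1 := by
    have : L1 ≤ L2 := Real.log_le_log h1τ (by nlinarith)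
    linarith
  have hcond' : N2 * (a2 - 1) < (a1 - 1) * N1 :=
    (div_lt_div_iff₀ hN1 (by linarith)).mp hcond
  -- need: N1 * (log a1 + L1 - La) + N2 * (L2 - L1) ≤ N1 * log a1
  nlinarith [mul_le_mul_of_nonneg_left key' (le_of_lt hN1),
    mul_nonneg (le_of_lt (sub_pos.2 (by linarith : N2 * (a2-1) < (a1-1) * N1))) hL21]
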